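/- arXiv:1302.3447 — 2 statements merged into one kernel-verified Lean document; each statement's English description precedes it below -/
import Mathlib

section
/- Let (Ω, F, P) be a probability space and let X_1, X_2, ... be i.i.d. Bernoulli(p) with p ∈ (0,1). Consider the multistage sampling scheme with stages ℓ = 1,...,s, sample sizes n_1 < ... < n_s satisfying n_1 ≥ 2ρ(1/ε - ρ) ln(1/(ζδ)) and n_s ≥ (1/(2ε²)) ln(1/(ζδ)), with stopping rule: stop at the first stage ℓ for which (|p̂_ℓ - 1/2| - ρε)² ≥ 1/4 + ε²n_ℓ/(2 ln(ζδ)), where p̂_ℓ = (∑_{i=1}^{n_ℓ} X_i)/n_ℓ. Let p̂ be the value of p̂_ℓ at stopping. If 0 < ζ ≤ (1/δ) exp( (ln(δ/2) + ln(1 - exp(-2ε²))) / (4ερ(1-ρε)) ), then Pr{|p̂ - p| < ε} ≥ 1 - δ for every p ∈ (0,1). -/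
set_option maxHeartbeats 1000000

open MeasureTheory ProbabilityTheory


lemma bern_hoeffding_lemma (p : ℝ) (hp0 : 0 ≤ p) (hp1 : p ≤ 1) (t : ℝ) :
    1 - p + p * Real.exp t ≤ Real.exp (p * t + t ^ 2 / 8) := by
  set d : ℝ → ℝ := fun u => 1 - p + p * Real.exp u with hd_def
  have hd : ∀ u, 0 < d u := by
    intro u
    rcases eq_or_lt_of_le hp0 with h | h
    · simp [hd_def, ← h]
    · have h2 := Real.exp_pos u
      simp only [hd_def]
      nlinarith
  set f : ℝ → ℝ := fun u => p * u + u ^ 2 / 8 - Real.log (d u) with hf_def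
  set f' : ℝ → ℝ := fun u => p + u / 4 - p * Real.exp u / d u with hf'_def
  set f'' : ℝ → ℝ := fun u =>
    1 / 4 - (p * Real.exp u * d u - p * Real.exp u * (p * Real.exp u)) / d u ^ 2 with hf''_def
  have hdd : ∀ u, HasDerivAt d (p * Real.exp u) u := by
    intro u
    exact ((Real.hasDerivAt_exp u).const_mul p).const_add (1 - p)
  have hf : ∀ u, HasDerivAt f (f' u) u := by
    intro u
    have h1 : HasDerivAt (fun u : ℝ => p * u + u ^ 2 / 8) (p + u / 4) u := by
      have := ((hasDerivAt_id u).const_mul p).add ((hasDerivAt_pow 2 u).div_const 8)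
      refine this.congr_deriv ?_
      ring
    have h2 : HasDerivAt (fun u => Real.log (d u)) (p * Real.exp u / d u) u :=
      (hdd u).log (hd u).ne'
    exact h1.sub h2
  have hf' : ∀ u, HasDerivAt f' (f'' u) u := by
    intro u
    have h1 : HasDerivAt (fun u : ℝ => p + u / 4) (1 / 4) u := by
      simpa using ((hasDerivAt_id u).div_const 4).const_add p
    have h2 : HasDerivAt (fun u => p * Real.exp u / d u)
        ((p * Real.exp u * d u - p * Real.exp u * (p * Real.exp u)) / d u ^ 2) u :=
      ((Real.hasDerivAt_exp u).const_mul p).div (hdd u) (hd u).ne'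
    exact h1.sub h2
  have hf''_nonneg : ∀ u, 0 ≤ f'' u := by
    intro u
    have hdu := hd u
    have he := Real.exp_pos u
    simp only [hf''_def, sub_nonneg, div_le_iff₀ (pow_pos hdu 2)]
    have : d u = 1 - p + p * Real.exp u := rfl
    nlinarith [sq_nonneg (1 - p - p * Real.exp u)]
  have hf'mono : Monotone f' := by
    apply monotone_of_deriv_nonneg
    · exact fun u => (hf' u).differentiableAt
    · intro u
      rw [(hf' u).deriv]
      exact hf''_nonneg u
  have hf'0 : f' 0 = 0 := by
    simp [hf'_def, hd_def]
  have hfd : Differentiable ℝ f := fun u => (hf u).differentiableAt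
  have key : ∀ u, 0 ≤ f u := by
    intro u
    have hf0 : f 0 = 0 := by simp [hf_def, hd_def]
    rcases le_total 0 u with h | h
    · have hmono : MonotoneOn f (Set.Ici (0 : ℝ)) := by
        apply monotoneOn_of_deriv_nonneg (convex_Ici 0) hfd.continuous.continuousOn
          (hfd.differentiableOn)
        intro x hx
        rw [(hf x).deriv]
        rw [interior_Ici] at hx
        rw [← hf'0]
        exact hf'mono hx.le
      have := hmono (Set.self_mem_Ici) h h
      rwa [hf0] at this
    · have hanti : AntitoneOn f (Set.Iic (0 : ℝ)) := by
        apply antitoneOn_of_deriv_nonpos (convex_Iic 0) hfd.continuous.continuousOn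
          (hfd.differentiableOn)
        intro x hx
        rw [(hf x).deriv]
        rw [interior_Iic] at hx
        rw [← hf'0]
        exact hf'mono hx.le
      have := hanti h (Set.self_mem_Iic) h
      rwa [hf0] at this
  have h := key t
  have hlog : Real.log (d t) ≤ p * t + t ^ 2 / 8 := by
    simp only [hf_def] at h; linarith
  calc 1 - p + p * Real.exp t = d t := rfl
    _ = Real.exp (Real.log (d t)) := (Real.exp_log (hd t)).symm
    _ ≤ Real.exp (p * t + t ^ 2 / 8) := Real.exp_le_exp.mpr hlog


lemma bern_exp_integral {Ω : Type*} [MeasurableSpace Ω] (P : Measure Ω) [IsProbabilityMeasure P]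
    {p : ℝ} (hp0 : 0 ≤ p) (hp1 : p ≤ 1) {Y : Ω → ℝ} (hY : Measurable Y)
    (h1 : P {ω | Y ω = 1} = ENNReal.ofReal p) (h0 : P {ω | Y ω = 0} = ENNReal.ofReal (1 - p))
    (t : ℝ) :
    Integrable (fun ω => Real.exp (t * Y ω)) P ∧
      ∫ ω, Real.exp (t * Y ω) ∂P = 1 - p + p * Real.exp t := by
  set A : Set Ω := {ω | Y ω = 1} with hA_def
  set B : Set Ω := {ω | Y ω = 0} with hB_def
  have hAm : MeasurableSet A := hY (measurableSet_singleton 1)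
  have hBm : MeasurableSet B := hY (measurableSet_singleton 0)
  have hdisj : Disjoint A B := by
    rw [Set.disjoint_left]
    intro ω hωA hωB
    simp only [hA_def, hB_def, Set.mem_setOf_eq] at hωA hωB
    rw [hωA] at hωB; norm_num at hωB
  have hunion : P (A ∪ B) = 1 := by
    rw [measure_union hdisj hBm, h1, h0, ← ENNReal.ofReal_add hp0 (by linarith)]
    norm_num
  have hcompl : P (A ∪ B)ᶜ = 0 := by
    rw [measure_compl (hAm.union hBm) (measure_ne_top _ _), hunion, measure_univ]
    simp
  set g : Ω → ℝ := fun ω =>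
    A.indicator (fun _ => Real.exp t) ω + B.indicator (fun _ => (1 : ℝ)) ω with hg_def
  have hae : (fun ω => Real.exp (t * Y ω)) =ᵐ[P] g := by
    rw [Filter.eventuallyEq_iff_exists_mem]
    refine ⟨A ∪ B, ?_, ?_⟩
    · rw [MeasureTheory.mem_ae_iff, Set.compl_union]
      rwa [Set.compl_union] at hcompl
    · intro ω hω
      rcases hω with hω | hω
      · have h1' : Y ω = 1 := hω
        have h2' : ω ∉ B := by
          simp only [hB_def, Set.mem_setOf_eq, h1']; norm_num
        simp [hg_def, Set.indicator_of_mem hω, Set.indicator_of_notMem h2', h1']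
      · have h0' : Y ω = 0 := hω
        have h2' : ω ∉ A := by
          simp only [hA_def, Set.mem_setOf_eq, h0']; norm_num
        simp [hg_def, Set.indicator_of_mem hω, Set.indicator_of_notMem h2', h0']
  have hgint : Integrable g P :=
    ((integrable_const (Real.exp t)).indicator hAm).add ((integrable_const (1 : ℝ)).indicator hBm)
  have hint : Integrable (fun ω => Real.exp (t * Y ω)) P := hgint.congr hae.symm
  refine ⟨hint, ?_⟩
  rw [integral_congr_ae hae, hg_def]
  rw [integral_add ((integrable_const (Real.exp t)).indicator hAm)
    ((integrable_const (1 : ℝ)).indicator hBm)]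
  rw [integral_indicator_const _ hAm, integral_indicator_const _ hBm, measureReal_def, measureReal_def, h1, h0,
    ENNReal.toReal_ofReal hp0, ENNReal.toReal_ofReal (by linarith : (0:ℝ) ≤ 1 - p)]
  simp [smul_eq_mul]
  ring

lemma bern_tail {Ω : Type*} [MeasurableSpace Ω] (P : Measure Ω) [IsProbabilityMeasure P]
    {p ε : ℝ} (hp0 : 0 < p) (hp1 : p < 1) (hε : 0 < ε)
    {X : ℕ → Ω → ℝ} (hmeas : ∀ i, Measurable (X i))
    (hind : iIndepFun X P)
    (hber : ∀ i, P {ω | X i ω = 1} = ENNReal.ofReal p ∧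
                 P {ω | X i ω = 0} = ENNReal.ofReal (1 - p))
    (m : ℕ) (hm : 0 < m) :
    P {ω | ε ≤ |(∑ i ∈ Finset.range m, X i ω) / m - p|} ≤
      ENNReal.ofReal (2 * Real.exp (-2 * m * ε ^ 2)) := by
  have hint : ∀ (i : ℕ) (t : ℝ), Integrable (fun ω => Real.exp (t * X i ω)) P := fun i t =>
    (bern_exp_integral P hp0.le hp1.le (hmeas i) (hber i).1 (hber i).2 t).1
  have hmgf : ∀ (i : ℕ) (t : ℝ), mgf (X i) P t = 1 - p + p * Real.exp t := fun i t =>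
    (bern_exp_integral P hp0.le hp1.le (hmeas i) (hber i).1 (hber i).2 t).2
  set S : Ω → ℝ := ∑ i ∈ Finset.range m, X i with hS_def
  have hSapp : ∀ ω, S ω = ∑ i ∈ Finset.range m, X i ω := by
    intro ω; simp [hS_def]
  have hmgfS : ∀ t : ℝ, mgf S P t = (1 - p + p * Real.exp t) ^ m := by
    intro t
    rw [hS_def, hind.mgf_sum hmeas]
    simp [hmgf]
  have hintS : ∀ t : ℝ, Integrable (fun ω => Real.exp (t * S ω)) P := fun t =>
    hind.integrable_exp_mul_sum hmeas (fun i _ => hint i t)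
  have hmpos : (0:ℝ) < m := by exact_mod_cast hm
  have hbase : ∀ t : ℝ, (1 - p + p * Real.exp t) ^ m ≤ Real.exp (m * (p * t + t ^ 2 / 8)) := by
    intro t
    have h1 : (0:ℝ) ≤ 1 - p + p * Real.exp t := by nlinarith [Real.exp_pos t]
    calc (1 - p + p * Real.exp t) ^ m ≤ (Real.exp (p * t + t ^ 2 / 8)) ^ m :=
          pow_le_pow_left₀ h1 (bern_hoeffding_lemma p hp0.le hp1.le t) m
      _ = Real.exp (m * (p * t + t ^ 2 / 8)) := by
          rw [← Real.exp_nat_mul]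
  have hup : (P {ω | (m:ℝ) * (p + ε) ≤ S ω}).toReal ≤ Real.exp (-2 * m * ε ^ 2) := by
    have h := measure_ge_le_exp_mul_mgf (μ := P) (X := S) ((m:ℝ) * (p + ε))
      (by positivity : (0:ℝ) ≤ 4 * ε) (hintS (4 * ε))
    refine h.trans ?_
    rw [hmgfS]
    calc Real.exp (-(4*ε) * ((m:ℝ) * (p + ε))) * (1 - p + p * Real.exp (4*ε)) ^ m
        ≤ Real.exp (-(4*ε) * ((m:ℝ) * (p + ε))) * Real.exp (m * (p * (4*ε) + (4*ε) ^ 2 / 8)) := by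
          exact mul_le_mul_of_nonneg_left (hbase (4*ε)) (Real.exp_pos _).le
      _ = Real.exp (-2 * m * ε ^ 2) := by
          rw [← Real.exp_add]; congr 1; ring
  have hlo : (P {ω | S ω ≤ (m:ℝ) * (p - ε)}).toReal ≤ Real.exp (-2 * m * ε ^ 2) := by
    have h := measure_le_le_exp_mul_mgf (μ := P) (X := S) ((m:ℝ) * (p - ε))
      (by linarith : -(4 * ε) ≤ 0) (hintS (-(4 * ε)))
    refine h.trans ?_
    rw [hmgfS]
    calc Real.exp (-(-(4*ε)) * ((m:ℝ) * (p - ε))) * (1 - p + p * Real.exp (-(4*ε))) ^ m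
        ≤ Real.exp (-(-(4*ε)) * ((m:ℝ) * (p - ε))) *
            Real.exp (m * (p * -(4*ε) + (-(4*ε)) ^ 2 / 8)) := by
          exact mul_le_mul_of_nonneg_left (hbase (-(4*ε))) (Real.exp_pos _).le
      _ = Real.exp (-2 * m * ε ^ 2) := by
          rw [← Real.exp_add]; congr 1; ring
  have hsub : {ω | ε ≤ |(∑ i ∈ Finset.range m, X i ω) / m - p|} ⊆
      {ω | (m:ℝ) * (p + ε) ≤ S ω} ∪ {ω | S ω ≤ (m:ℝ) * (p - ε)} := by
    intro ω hω
    simp only [Set.mem_setOf_eq] at hω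
    rw [← hSapp ω] at hω
    rcases le_abs.mp hω with h | h
    · left
      simp only [Set.mem_setOf_eq]
      have : p + ε ≤ S ω / m := by linarith
      calc (m:ℝ) * (p + ε) ≤ m * (S ω / m) := by
            exact mul_le_mul_of_nonneg_left this hmpos.le
        _ = S ω := by field_simp
    · right
      simp only [Set.mem_setOf_eq]
      have : S ω / m ≤ p - ε := by linarith
      calc S ω = m * (S ω / m) := by field_simp
        _ ≤ m * (p - ε) := mul_le_mul_of_nonneg_left this hmpos.le
  calc P {ω | ε ≤ |(∑ i ∈ Finset.range m, X i ω) / m - p|}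
      ≤ P ({ω | (m:ℝ) * (p + ε) ≤ S ω} ∪ {ω | S ω ≤ (m:ℝ) * (p - ε)}) := measure_mono hsub
    _ ≤ P {ω | (m:ℝ) * (p + ε) ≤ S ω} + P {ω | S ω ≤ (m:ℝ) * (p - ε)} := measure_union_le _ _
    _ ≤ ENNReal.ofReal (Real.exp (-2 * m * ε ^ 2)) + ENNReal.ofReal (Real.exp (-2 * m * ε ^ 2)) := by
        gcongr
        · exact (ENNReal.le_ofReal_iff_toReal_le (measure_ne_top _ _) (Real.exp_pos _).le).mpr hup
        · exact (ENNReal.le_ofReal_iff_toReal_le (measure_ne_top _ _) (Real.exp_pos _).le).mpr hlo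
    _ = ENNReal.ofReal (2 * Real.exp (-2 * m * ε ^ 2)) := by
        rw [← ENNReal.ofReal_add (Real.exp_pos _).le (Real.exp_pos _).le]
        congr 1; ring

theorem stmt10 {Ω : Type*} [MeasurableSpace Ω] (P : Measure Ω) [IsProbabilityMeasure P]
    (p ε δ ρ ζ : ℝ) (hp : p ∈ Set.Ioo (0 : ℝ) 1) (hε : ε ∈ Set.Ioo (0 : ℝ) 1)
    (hδ : δ ∈ Set.Ioo (0 : ℝ) 1) (hρ : ρ ∈ Set.Ioc (0 : ℝ) 1) (hρε : ρ * ε ≤ 1 / 4)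
    (hζ : 0 < ζ) (hζδ : ζ * δ < 1)
    (s : ℕ) (hs : 0 < s) (n : ℕ → ℕ)
    (hmono : StrictMonoOn n (Set.Icc 1 s)) (hpos : ∀ ℓ, 0 < n ℓ)
    (hn1 : (n 1 : ℝ) ≥ 2 * ρ * (1 / ε - ρ) * Real.log (1 / (ζ * δ)))
    (hns : (n s : ℝ) ≥ 1 / (2 * ε ^ 2) * Real.log (1 / (ζ * δ)))
    (X : ℕ → Ω → ℝ) (hmeas : ∀ i, Measurable (X i))
    (hind : iIndepFun X P)
    (hber : ∀ i, P {ω | X i ω = 1} = ENNReal.ofReal p ∧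
                 P {ω | X i ω = 0} = ENNReal.ofReal (1 - p))
    (phat : ℕ → Ω → ℝ)
    (hphat : ∀ ℓ ω, phat ℓ ω = (∑ i ∈ Finset.range (n ℓ), X i ω) / (n ℓ))
    (D : ℕ → Ω → Prop)
    (hD : ∀ ℓ ω, D ℓ ω ↔
        (|phat ℓ ω - 1 / 2| - ρ * ε) ^ 2 ≥ 1 / 4 + ε ^ 2 * (n ℓ) / (2 * Real.log (ζ * δ)))
    (L : Ω → ℕ) (hL : ∀ ω, L ω = sInf {ℓ | ℓ ∈ Set.Icc 1 s ∧ D ℓ ω})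
    (hζbound : ζ ≤ 1 / δ * Real.exp
        ((Real.log (δ / 2) + Real.log (1 - Real.exp (-2 * ε ^ 2))) / (4 * ε * ρ * (1 - ρ * ε)))) :
    P {ω | |phat (L ω) ω - p| < ε} ≥ ENNReal.ofReal (1 - δ) := by
  obtain ⟨hp0, hp1⟩ := hp
  obtain ⟨hε0, hε1⟩ := hε
  obtain ⟨hδ0, hδ1⟩ := hδ
  obtain ⟨hρ0, hρ1⟩ := hρ
  have hε2 : (0:ℝ) < ε ^ 2 := by positivity
  have hζδ0 : (0:ℝ) < ζ * δ := by positivity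
  have hlogζδ : Real.log (ζ * δ) < 0 := Real.log_neg hζδ0 hζδ
  have hloginv : Real.log (1 / (ζ * δ)) = -Real.log (ζ * δ) := by
    rw [one_div, Real.log_inv]
  -- the last stage always satisfies the stopping condition
  have hDs : ∀ ω, D s ω := by
    intro ω
    rw [hD]
    have h1 : ε ^ 2 * (n s : ℝ) ≥ -Real.log (ζ * δ) / 2 := by
      rw [hloginv] at hns
      have hkey : ε ^ 2 * (1 / (2 * ε ^ 2) * -Real.log (ζ * δ)) = -Real.log (ζ * δ) / 2 := by
        field_simp
      nlinarith [mul_le_mul_of_nonneg_left hns hε2.le]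
    have h2 : ε ^ 2 * (n s : ℝ) / (2 * Real.log (ζ * δ)) ≤ -(1/4) := by
      rw [div_le_iff_of_neg (by linarith : 2 * Real.log (ζ * δ) < 0)]
      nlinarith
    have h3 : (0:ℝ) ≤ (|phat s ω - 1 / 2| - ρ * ε) ^ 2 := sq_nonneg _
    linarith
  have hLmem : ∀ ω, L ω ∈ Set.Icc 1 s := by
    intro ω
    rw [hL]
    have hsT : s ∈ {ℓ | ℓ ∈ Set.Icc 1 s ∧ D ℓ ω} := ⟨⟨hs, le_refl s⟩, hDs ω⟩
    exact (Nat.sInf_mem ⟨s, hsT⟩).1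
  -- good event
  set G : Set Ω := ⋂ ℓ ∈ Finset.Icc 1 s, {ω | |phat ℓ ω - p| < ε} with hG_def
  have hGE : G ⊆ {ω | |phat (L ω) ω - p| < ε} := by
    intro ω hω
    have hmem : L ω ∈ Finset.Icc 1 s := by
      rw [Finset.mem_Icc]
      exact ⟨(hLmem ω).1, (hLmem ω).2⟩
    simp only [hG_def, Set.mem_iInter] at hω
    exact hω (L ω) hmem
  set Bad : ℕ → Set Ω := fun ℓ => {ω | ε ≤ |phat ℓ ω - p|} with hBad_def
  have hGc : Gᶜ = ⋃ ℓ ∈ Finset.Icc 1 s, Bad ℓ := by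
    ext ω
    simp [hG_def, hBad_def, not_lt]
  have hBadle : ∀ ℓ, P (Bad ℓ) ≤ ENNReal.ofReal (2 * Real.exp (-2 * (n ℓ) * ε ^ 2)) := by
    intro ℓ
    have hset : Bad ℓ = {ω | ε ≤ |(∑ i ∈ Finset.range (n ℓ), X i ω) / (n ℓ) - p|} := by
      ext ω
      simp only [hBad_def, Set.mem_setOf_eq, hphat]
    rw [hset]
    exact bern_tail P hp0 hp1 hε0 hmeas hind hber (n ℓ) (hpos ℓ)
  -- real-valued sum bound
  set r : ℝ := Real.exp (-2 * ε ^ 2) with hr_def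
  have hr0 : 0 < r := Real.exp_pos _
  have hr1 : r < 1 := by
    rw [hr_def, Real.exp_lt_one_iff]
    nlinarith
  have h1r : (0:ℝ) < 1 - r := by linarith
  set c : ℝ := Real.exp (-2 * (n 1 : ℝ) * ε ^ 2) with hc_def
  have hnl : ∀ ℓ, 1 ≤ ℓ → ℓ ≤ s → n 1 + (ℓ - 1) ≤ n ℓ := by
    intro ℓ h1ℓ
    induction ℓ, h1ℓ using Nat.le_induction with
    | base => intro _; simp
    | succ ℓ h1ℓ ih =>
      intro hℓs
      have hℓs' : ℓ ≤ s := by omega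
      have hlt : n ℓ < n (ℓ + 1) :=
        hmono ⟨h1ℓ, hℓs'⟩ ⟨by omega, hℓs⟩ (by omega)
      have := ih hℓs'
      omega
  have hterm : ∀ ℓ ∈ Finset.Icc 1 s,
      2 * Real.exp (-2 * (n ℓ : ℝ) * ε ^ 2) ≤ 2 * c * r ^ (ℓ - 1) := by
    intro ℓ hℓ
    rw [Finset.mem_Icc] at hℓ
    have hcast : ((ℓ - 1 : ℕ) : ℝ) = (ℓ : ℝ) - 1 := by
      rw [Nat.cast_sub hℓ.1, Nat.cast_one]
    have hn : (n 1 : ℝ) + ((ℓ : ℝ) - 1) ≤ (n ℓ : ℝ) := by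
      have h := hnl ℓ hℓ.1 hℓ.2
      have h2 : n 1 + ℓ ≤ n ℓ + 1 := by omega
      have h3 : ((n 1 : ℕ) : ℝ) + (ℓ : ℝ) ≤ ((n ℓ : ℕ) : ℝ) + 1 := by exact_mod_cast h2
      linarith
    have hcr : c * r ^ (ℓ - 1) = Real.exp (-2 * ((n 1 : ℝ) + ((ℓ:ℝ) - 1)) * ε ^ 2) := by
      rw [hc_def, hr_def, ← Real.exp_nat_mul, ← Real.exp_add]
      congr 1
      rw [hcast]
      ring
    have hexp : Real.exp (-2 * (n ℓ : ℝ) * ε ^ 2) ≤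
        Real.exp (-2 * ((n 1 : ℝ) + ((ℓ:ℝ) - 1)) * ε ^ 2) := by
      apply Real.exp_le_exp.mpr
      nlinarith
    calc 2 * Real.exp (-2 * (n ℓ : ℝ) * ε ^ 2)
        ≤ 2 * Real.exp (-2 * ((n 1 : ℝ) + ((ℓ:ℝ) - 1)) * ε ^ 2) := by linarith
      _ = 2 * c * r ^ (ℓ - 1) := by linear_combination (-2 : ℝ) * hcr
  have hgeom : ∑ ℓ ∈ Finset.Icc 1 s, r ^ (ℓ - 1) ≤ 1 / (1 - r) := by
    have heq : ∑ ℓ ∈ Finset.Icc 1 s, r ^ (ℓ - 1) = ∑ i ∈ Finset.range s, r ^ i := by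
      rw [← Finset.Ico_add_one_right_eq_Icc, Finset.sum_Ico_eq_sum_range]
      simp
    rw [heq, geom_sum_eq (ne_of_lt hr1)]
    have h1 : (r ^ s - 1) / (r - 1) = (1 - r ^ s) / (1 - r) := by
      rw [div_eq_div_iff (by linarith) (by linarith)]
      ring
    rw [h1]
    gcongr
    · nlinarith [pow_nonneg hr0.le s]
  have hsum : ∑ ℓ ∈ Finset.Icc 1 s, 2 * Real.exp (-2 * (n ℓ : ℝ) * ε ^ 2)
      ≤ 2 * c / (1 - r) := by
    calc ∑ ℓ ∈ Finset.Icc 1 s, 2 * Real.exp (-2 * (n ℓ : ℝ) * ε ^ 2)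
        ≤ ∑ ℓ ∈ Finset.Icc 1 s, 2 * c * r ^ (ℓ - 1) := Finset.sum_le_sum hterm
      _ = 2 * c * ∑ ℓ ∈ Finset.Icc 1 s, r ^ (ℓ - 1) := by rw [Finset.mul_sum]
      _ ≤ 2 * c * (1 / (1 - r)) := by
          apply mul_le_mul_of_nonneg_left hgeom
          positivity
      _ = 2 * c / (1 - r) := by ring
  -- key arithmetic: 2c/(1-r) ≤ δ
  have hkey : 2 * c / (1 - r) ≤ δ := by
    set A : ℝ := Real.log (δ / 2) + Real.log (1 - r) with hA_def
    set B : ℝ := 4 * ε * ρ * (1 - ρ * ε) with hB_def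
    have hρε1 : ρ * ε < 1 := by linarith
    have hB : 0 < B := by
      rw [hB_def]
      have h1' : (0:ℝ) < 1 - ρ * ε := by linarith
      have h2' := mul_pos (mul_pos hε0 hρ0) h1'
      linarith
    have hζδle : ζ * δ ≤ Real.exp (A / B) := by
      have h := mul_le_mul_of_nonneg_right hζbound hδ0.le
      calc ζ * δ ≤ 1 / δ * Real.exp (A / B) * δ := h
        _ = Real.exp (A / B) := by field_simp
    have hlogle : Real.log (ζ * δ) ≤ A / B := (Real.log_le_iff_le_exp hζδ0).mpr hζδle
    have hK : (0:ℝ) ≤ 2 * ρ * (1 / ε - ρ) := by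
      have hρle : ρ ≤ 1 / ε := by
        rw [le_div_iff₀ hε0]
        linarith
      nlinarith
    have hchain : 2 * ρ * (1 / ε - ρ) * (-(A / B)) ≤ (n 1 : ℝ) := by
      rw [hloginv] at hn1
      have h := mul_le_mul_of_nonneg_left (neg_le_neg hlogle) hK
      linarith
    have hKAB : 2 * ρ * (1 / ε - ρ) * (-(A / B)) = -A / (2 * ε ^ 2) := by
      rw [hB_def]
      have hne : (1 - ρ * ε) ≠ 0 := by linarith
      field_simp
      ring
    have hn1A : -2 * (n 1 : ℝ) * ε ^ 2 ≤ A := by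
      rw [hKAB] at hchain
      have h' := (div_le_iff₀ (by positivity : (0:ℝ) < 2 * ε ^ 2)).mp hchain
      linarith
    have hcA : c ≤ Real.exp A := by
      rw [hc_def]
      exact Real.exp_le_exp.mpr hn1A
    have hexpA : Real.exp A = δ / 2 * (1 - r) := by
      rw [hA_def, Real.exp_add, Real.exp_log (by linarith : (0:ℝ) < δ / 2), Real.exp_log h1r]
    rw [div_le_iff₀ h1r]
    nlinarith
  have hsumδ : ∑ ℓ ∈ Finset.Icc 1 s, 2 * Real.exp (-2 * (n ℓ : ℝ) * ε ^ 2) ≤ δ :=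
    hsum.trans hkey
  have hPGc : P Gᶜ ≤ ENNReal.ofReal δ := by
    rw [hGc]
    calc P (⋃ ℓ ∈ Finset.Icc 1 s, Bad ℓ) ≤ ∑ ℓ ∈ Finset.Icc 1 s, P (Bad ℓ) :=
          measure_biUnion_finset_le _ _
      _ ≤ ∑ ℓ ∈ Finset.Icc 1 s, ENNReal.ofReal (2 * Real.exp (-2 * (n ℓ : ℝ) * ε ^ 2)) :=
          Finset.sum_le_sum fun ℓ _ => hBadle ℓ
      _ = ENNReal.ofReal (∑ ℓ ∈ Finset.Icc 1 s, 2 * Real.exp (-2 * (n ℓ : ℝ) * ε ^ 2)) :=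
          (ENNReal.ofReal_sum_of_nonneg fun ℓ _ => by positivity).symm
      _ ≤ ENNReal.ofReal δ := ENNReal.ofReal_le_ofReal hsumδ
  have hPG : 1 - ENNReal.ofReal δ ≤ P G := by
    have h1 : (1 : ENNReal) ≤ P G + P Gᶜ := by
      rw [← measure_univ (μ := P), ← Set.union_compl_self G]
      exact measure_union_le _ _
    have h2 : 1 - P Gᶜ ≤ P G := tsub_le_iff_right.mpr h1
    exact le_trans (tsub_le_tsub_left hPGc 1) h2
  calc ENNReal.ofReal (1 - δ) = 1 - ENNReal.ofReal δ := by
        rw [ENNReal.ofReal_sub 1 hδ0.le, ENNReal.ofReal_one]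
    _ ≤ P G := hPG
    _ ≤ P {ω | |phat (L ω) ω - p| < ε} := measure_mono hGE
end

section
/- Under the double-parabolic sampling scheme with p ∈ (0,1/2], let a_ℓ = 1/2 - ρε - sqrt(1/4 + ε²n_ℓ/(2 ln(ζδ))) and let τ be the stage index such that a_{τ-1} ≤ p < a_τ. Then the expected sample number satisfies E[𝐧] ≤ n_τ + ∑_{ℓ=τ}^{s-1} (n_{ℓ+1} - n_ℓ) exp(n_ℓ M(a_ℓ, p)), where M is the Bernoulli KL-type function M(z,θ) = z ln(θ/z) + (1-z) ln((1-θ)/(1-z)). -/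
open MeasureTheory ProbabilityTheory

lemma bern_exp_int {Ω : Type*} [MeasurableSpace Ω] (P : Measure Ω) [IsProbabilityMeasure P]
    (Y : Ω → ℝ) (hY : Measurable Y) (p : ℝ) (hp0 : 0 ≤ p) (hp1 : p ≤ 1)
    (h1 : P {ω | Y ω = 1} = ENNReal.ofReal p) (h0 : P {ω | Y ω = 0} = ENNReal.ofReal (1 - p))
    (t : ℝ) :
    Integrable (fun ω => Real.exp (t * Y ω)) P ∧
      ∫ ω, Real.exp (t * Y ω) ∂P = p * Real.exp t + (1 - p) := by
  set A : Set Ω := {ω | Y ω = 1} with hAdef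
  set B : Set Ω := {ω | Y ω = 0} with hBdef
  have hA : MeasurableSet A := hY (measurableSet_singleton 1)
  have hB : MeasurableSet B := hY (measurableSet_singleton 0)
  have hdisj : Disjoint A B := by
    rw [Set.disjoint_left]
    intro ω h1' h0'
    exact one_ne_zero ((Set.mem_setOf_eq ▸ h1').symm.trans (Set.mem_setOf_eq ▸ h0'))
  have hunion : P (A ∪ B) = 1 := by
    rw [measure_union hdisj hB, h1, h0, ← ENNReal.ofReal_add hp0 (by linarith)]
    norm_num
  have hcompl : P (A ∪ B)ᶜ = 0 := by
    rw [measure_compl (hA.union hB) (measure_ne_top _ _), hunion, measure_univ]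
    simp
  set g : Ω → ℝ := fun ω =>
    A.indicator (fun _ => Real.exp t) ω + B.indicator (fun _ => 1) ω with hgdef
  have hae : (fun ω => Real.exp (t * Y ω)) =ᵐ[P] g := by
    refine Filter.eventuallyEq_of_mem (MeasureTheory.mem_ae_iff.2 hcompl) ?_
    intro ω hω
    rcases hω with h | h
    · have hy : Y ω = 1 := h
      have hnb : ω ∉ B := by simp [hBdef, hy]
      simp [hgdef, Set.indicator_of_mem h, Set.indicator_of_notMem hnb, hy]
    · have hy : Y ω = 0 := h
      have hna : ω ∉ A := by simp [hAdef, hy]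
      simp [hgdef, Set.indicator_of_mem h, Set.indicator_of_notMem hna, hy]
  have hgint : Integrable g P :=
    ((integrable_const _).indicator hA).add ((integrable_const _).indicator hB)
  have hint : Integrable (fun ω => Real.exp (t * Y ω)) P := hgint.congr hae.symm
  refine ⟨hint, ?_⟩
  rw [integral_congr_ae hae, hgdef]
  rw [integral_add ((integrable_const _).indicator hA) ((integrable_const _).indicator hB),
    integral_indicator_const _ hA, integral_indicator_const _ hB, measureReal_def, measureReal_def, h1, h0,
    ENNReal.toReal_ofReal hp0, ENNReal.toReal_ofReal (by linarith)]
  simp [mul_comm]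

lemma bern_chernoff {Ω : Type*} [MeasurableSpace Ω] (P : Measure Ω) [IsProbabilityMeasure P]
    (X : ℕ → Ω → ℝ) (hmeas : ∀ i, Measurable (X i))
    (hind : iIndepFun X P)
    (p : ℝ) (hp0 : 0 < p)
    (hber : ∀ i, P {ω | X i ω = 1} = ENNReal.ofReal p ∧
                 P {ω | X i ω = 0} = ENNReal.ofReal (1 - p))
    (m : ℕ) (b : ℝ) (hpb : p < b) (hb1 : b < 1) :
    (P {ω | (m : ℝ) * b ≤ ∑ i ∈ Finset.range m, X i ω}).toReal ≤
      Real.exp (m * (b * Real.log (p / b) + (1 - b) * Real.log ((1 - p) / (1 - b)))) := by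
  have hb0 : 0 < b := hp0.trans hpb
  have h1b : 0 < 1 - b := by linarith
  have h1p : 0 < 1 - p := by linarith
  set t : ℝ := Real.log (b * (1 - p) / (p * (1 - b))) with htdef
  have hargpos : 0 < b * (1 - p) / (p * (1 - b)) := by positivity
  have ht0 : 0 ≤ t := by
    apply Real.log_nonneg
    rw [le_div_iff₀ (by positivity)]
    nlinarith
  have het : Real.exp t = b * (1 - p) / (p * (1 - b)) := Real.exp_log hargpos
  have hone : ∀ i, Integrable (fun ω => Real.exp (t * X i ω)) P ∧
      ∫ ω, Real.exp (t * X i ω) ∂P = p * Real.exp t + (1 - p) := fun i =>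
    bern_exp_int P (X i) (hmeas i) p hp0.le (by linarith) (hber i).1 (hber i).2 t
  have hSint : Integrable (fun ω => Real.exp (t * (∑ i ∈ Finset.range m, X i) ω)) P :=
    hind.integrable_exp_mul_sum hmeas (fun i _ => (hone i).1)
  have hmgf : mgf (∑ i ∈ Finset.range m, X i) P t = (p * Real.exp t + (1 - p)) ^ m := by
    rw [hind.mgf_sum hmeas]
    simp only [mgf]
    rw [Finset.prod_congr rfl (fun i _ => (hone i).2), Finset.prod_const, Finset.card_range]
  have hch := measure_ge_le_exp_mul_mgf ((m : ℝ) * b) ht0 hSint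
  rw [hmgf] at hch
  have hset : {ω | (m : ℝ) * b ≤ ∑ i ∈ Finset.range m, X i ω} =
      {ω | (m : ℝ) * b ≤ (∑ i ∈ Finset.range m, X i) ω} := by
    ext ω; simp [Finset.sum_apply]
  rw [hset]
  refine hch.trans (le_of_eq ?_)
  have hkey : Real.exp (-t * b) * (p * Real.exp t + (1 - p)) =
      Real.exp (b * Real.log (p / b) + (1 - b) * Real.log ((1 - p) / (1 - b))) := by
    have h2 : p * Real.exp t + (1 - p) = (1 - p) / (1 - b) := by
      rw [het]; field_simp; ring
    have h3 : (1 - p) / (1 - b) = Real.exp (Real.log (1 - p) - Real.log (1 - b)) := by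
      rw [← Real.log_div h1p.ne' h1b.ne', Real.exp_log (by positivity)]
    rw [h2, h3, ← Real.exp_add]
    congr 1
    rw [htdef, Real.log_div (by positivity) (by positivity),
      Real.log_mul hb0.ne' h1p.ne', Real.log_mul hp0.ne' h1b.ne',
      Real.log_div hp0.ne' hb0.ne', Real.log_exp]
    ring
  calc Real.exp (-t * ((m : ℝ) * b)) * (p * Real.exp t + (1 - p)) ^ m
      = (Real.exp (-t * b)) ^ m * (p * Real.exp t + (1 - p)) ^ m := by
        rw [show -t * ((m : ℝ) * b) = (m : ℝ) * (-t * b) by ring, Real.exp_nat_mul]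
    _ = (Real.exp (-t * b) * (p * Real.exp t + (1 - p))) ^ m := (mul_pow _ _ _).symm
    _ = (Real.exp (b * Real.log (p / b) + (1 - b) * Real.log ((1 - p) / (1 - b)))) ^ m := by
        rw [hkey]
    _ = Real.exp (m * (b * Real.log (p / b) + (1 - b) * Real.log ((1 - p) / (1 - b)))) := by
        rw [← Real.exp_nat_mul]

theorem stmt15 {Ω : Type*} [MeasurableSpace Ω] (P : Measure Ω) [IsProbabilityMeasure P]
    (p ε δ ρ ζ : ℝ) (hp : p ∈ Set.Ioc (0 : ℝ) (1 / 2)) (hε : 0 < ε)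
    (hρ : ρ ∈ Set.Ioc (0 : ℝ) 1) (hζδ : 0 < ζ * δ) (hζδ1 : ζ * δ < 1)
    (s : ℕ) (hs : 0 < s) (n : ℕ → ℕ)
    (hmono : StrictMonoOn n (Set.Icc 1 s)) (hpos : ∀ ℓ, 0 < n ℓ)
    (X : ℕ → Ω → ℝ) (hmeas : ∀ i, Measurable (X i))
    (hind : iIndepFun X P)
    (hber : ∀ i, P {ω | X i ω = 1} = ENNReal.ofReal p ∧
                 P {ω | X i ω = 0} = ENNReal.ofReal (1 - p))
    (phat : ℕ → Ω → ℝ)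
    (hphat : ∀ ℓ ω, phat ℓ ω = (∑ i ∈ Finset.range (n ℓ), X i ω) / (n ℓ))
    (D : ℕ → Ω → Prop)
    (hD : ∀ ℓ ω, D ℓ ω ↔
        (|phat ℓ ω - 1 / 2| - ρ * ε) ^ 2 ≥ 1 / 4 + ε ^ 2 * (n ℓ) / (2 * Real.log (ζ * δ)))
    (hterm : ∀ ω, ∃ ℓ ∈ Set.Icc 1 s, D ℓ ω)
    (L : Ω → ℕ) (hL : ∀ ω, L ω = sInf {ℓ | ℓ ∈ Set.Icc 1 s ∧ D ℓ ω})
    (a : ℕ → ℝ)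
    (ha : ∀ j, a j = 1 / 2 - ρ * ε - Real.sqrt (1 / 4 + ε ^ 2 * (n j) / (2 * Real.log (ζ * δ))))
    (hnneg : ∀ j < s, 0 ≤ 1 / 4 + ε ^ 2 * (n j) / (2 * Real.log (ζ * δ)))
    (τ : ℕ) (hτ1 : 1 ≤ τ) (hτs : τ ≤ s) (hτa : a (τ - 1) ≤ p) (hτb : p < a τ) :
    ∫ ω, (n (L ω) : ℝ) ∂P ≤
      (n τ : ℝ) + ∑ ℓ ∈ Finset.Ico τ s, ((n (ℓ + 1) : ℝ) - (n ℓ : ℝ)) *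
        Real.exp ((n ℓ) *
          (a ℓ * Real.log (p / a ℓ) + (1 - a ℓ) * Real.log ((1 - p) / (1 - a ℓ)))) := by
  obtain ⟨hp0, hp2⟩ := hp
  have hlog : Real.log (ζ * δ) < 0 := Real.log_neg hζδ hζδ1
  set B : ℕ → Set Ω := fun ℓ => {ω | a ℓ < phat ℓ ω} with hBdef
  have hphatm : ∀ ℓ, Measurable (phat ℓ) := by
    intro ℓ
    have : phat ℓ = fun ω => (∑ i ∈ Finset.range (n ℓ), X i ω) / (n ℓ) :=
      funext (hphat ℓ)
    rw [this]
    exact (Finset.measurable_sum _ (fun i _ => hmeas i)).div_const _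
  have hBmeas : ∀ ℓ, MeasurableSet (B ℓ) := fun ℓ =>
    measurableSet_lt measurable_const (hphatm ℓ)
  set c : ℕ → ℝ := fun ℓ => (n (ℓ + 1) : ℝ) - n ℓ with hcdef
  have hcnn : ∀ ℓ, τ ≤ ℓ → ℓ < s → 0 ≤ c ℓ := by
    intro ℓ h1 h2
    have : n ℓ < n (ℓ + 1) :=
      hmono ⟨le_trans hτ1 h1, h2.le⟩ ⟨le_trans (le_trans hτ1 h1) (Nat.le_succ ℓ), h2⟩
        (Nat.lt_succ_self ℓ)
    simp only [hcdef, sub_nonneg, Nat.cast_le]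
    exact this.le
  set g : Ω → ℝ := fun ω =>
    (n τ : ℝ) + ∑ ℓ ∈ Finset.Ico τ s, (B ℓ).indicator (fun _ => c ℓ) ω with hgdef
  -- properties of L
  have hLmem : ∀ ω, L ω ∈ Set.Icc 1 s ∧ D (L ω) ω := by
    intro ω
    rw [hL ω]
    obtain ⟨ℓ, hℓ, hd⟩ := hterm ω
    have hmem := Nat.sInf_mem (s := {ℓ | ℓ ∈ Set.Icc 1 s ∧ D ℓ ω}) ⟨ℓ, ⟨hℓ, hd⟩⟩
    exact hmem
  have hLle : ∀ ω ℓ, ℓ ∈ Set.Icc 1 s → D ℓ ω → L ω ≤ ℓ := by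
    intro ω ℓ h1 h2
    rw [hL ω]
    exact Nat.sInf_le ⟨h1, h2⟩
  -- not D implies in B
  have hnotD : ∀ ℓ ω, ℓ < s → ¬ D ℓ ω → ω ∈ B ℓ := by
    intro ℓ ω hℓs hnd
    have hlt : (|phat ℓ ω - 1 / 2| - ρ * ε) ^ 2 <
        1 / 4 + ε ^ 2 * (n ℓ) / (2 * Real.log (ζ * δ)) := by
      by_contra hcon
      exact hnd ((hD ℓ ω).2 (not_lt.1 hcon))
    have hc0 := hnneg ℓ hℓs
    set x : ℝ := |phat ℓ ω - 1 / 2| - ρ * ε with hxdef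
    have hx : x < Real.sqrt (1 / 4 + ε ^ 2 * (n ℓ) / (2 * Real.log (ζ * δ))) := by
      calc x ≤ |x| := le_abs_self x
        _ = Real.sqrt (x ^ 2) := (Real.sqrt_sq_eq_abs x).symm
        _ < _ := by
            exact (Real.sqrt_lt_sqrt (sq_nonneg x) hlt)
    have h5 : 1 / 2 - phat ℓ ω ≤ |phat ℓ ω - 1 / 2| := by
      rw [abs_sub_comm]; exact le_abs_self _
    show a ℓ < phat ℓ ω
    rw [ha ℓ]
    simp only [hxdef] at hx
    linarith
  -- pointwise bound
  have hpt : ∀ ω, (n (L ω) : ℝ) ≤ g ω := by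
    intro ω
    obtain ⟨⟨hk1, hks⟩, hDk⟩ := hLmem ω
    have hsum_nonneg : ∀ ℓ ∈ Finset.Ico τ s, 0 ≤ (B ℓ).indicator (fun _ => c ℓ) ω := by
      intro ℓ hℓ
      obtain ⟨h1', h2'⟩ := Finset.mem_Ico.1 hℓ
      exact Set.indicator_nonneg (fun _ _ => hcnn ℓ h1' h2') ω
    by_cases hk : L ω ≤ τ
    · have h6 : (n (L ω) : ℝ) ≤ n τ :=
        Nat.cast_le.2 (hmono.monotoneOn ⟨hk1, hks⟩ ⟨hτ1, hτs⟩ hk)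
      have h7 := Finset.sum_nonneg hsum_nonneg
      simp only [hgdef]
      linarith
    · push_neg at hk
      have hindic : ∀ ℓ ∈ Finset.Ico τ (L ω), (B ℓ).indicator (fun _ => c ℓ) ω = c ℓ := by
        intro ℓ hℓ
        obtain ⟨h1', h2'⟩ := Finset.mem_Ico.1 hℓ
        have hℓ1 : 1 ≤ ℓ := le_trans hτ1 h1'
        have hℓs : ℓ < s := lt_of_lt_of_le h2' hks
        have hnD : ¬ D ℓ ω := fun hDℓ =>
          absurd (hLle ω ℓ ⟨hℓ1, hℓs.le⟩ hDℓ) (not_le.2 h2')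
        exact Set.indicator_of_mem (hnotD ℓ ω hℓs hnD) _
      have htel : ∑ ℓ ∈ Finset.Ico τ (L ω), c ℓ = (n (L ω) : ℝ) - n τ := by
        simp only [hcdef]
        rw [Finset.sum_Ico_eq_sub _ hk.le,
          Finset.sum_range_sub (fun i => (n i : ℝ)), Finset.sum_range_sub (fun i => (n i : ℝ))]
        ring
      have hsub : Finset.Ico τ (L ω) ⊆ Finset.Ico τ s := Finset.Ico_subset_Ico le_rfl hks
      calc (n (L ω) : ℝ) = (n τ : ℝ) + ∑ ℓ ∈ Finset.Ico τ (L ω), c ℓ := by rw [htel]; ring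
        _ = (n τ : ℝ) + ∑ ℓ ∈ Finset.Ico τ (L ω), (B ℓ).indicator (fun _ => c ℓ) ω := by
            rw [Finset.sum_congr rfl hindic]
        _ ≤ g ω := by
            simp only [hgdef]
            exact add_le_add_right (Finset.sum_le_sum_of_subset_of_nonneg hsub
              (fun ℓ hℓ _ => hsum_nonneg ℓ hℓ)) _
  -- integrability of g and its integral
  have hgint : Integrable g P := by
    refine (integrable_const _).add ?_
    exact integrable_finset_sum _ (fun ℓ _ => (integrable_const _).indicator (hBmeas ℓ))
  have h1 : ∫ ω, (n (L ω) : ℝ) ∂P ≤ ∫ ω, g ω ∂P :=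
    integral_mono_of_nonneg
      (Filter.Eventually.of_forall fun ω => by positivity) hgint
      (Filter.Eventually.of_forall hpt)
  have hgval : ∫ ω, g ω ∂P =
      (n τ : ℝ) + ∑ ℓ ∈ Finset.Ico τ s, c ℓ * (P (B ℓ)).toReal := by
    simp only [hgdef]
    rw [integral_add (integrable_const _)
      (integrable_finset_sum _ (fun ℓ _ => (integrable_const _).indicator (hBmeas ℓ))),
      integral_finset_sum _ (fun ℓ _ => (integrable_const _).indicator (hBmeas ℓ))]
    simp only [integral_const, measureReal_def, measure_univ, ENNReal.toReal_one, smul_eq_mul, one_mul]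
    congr 1
    refine Finset.sum_congr rfl (fun ℓ _ => ?_)
    rw [integral_indicator_const _ (hBmeas ℓ), measureReal_def, smul_eq_mul, mul_comm]
  -- Chernoff bound per stage
  have hch : ∀ ℓ ∈ Finset.Ico τ s, (P (B ℓ)).toReal ≤
      Real.exp ((n ℓ) *
        (a ℓ * Real.log (p / a ℓ) + (1 - a ℓ) * Real.log ((1 - p) / (1 - a ℓ)))) := by
    intro ℓ hℓ
    obtain ⟨hℓτ, hℓs⟩ := Finset.mem_Ico.1 hℓ
    -- p < a ℓ
    have hnτℓ : n τ ≤ n ℓ :=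
      hmono.monotoneOn ⟨hτ1, hτs⟩ ⟨le_trans hτ1 hℓτ, hℓs.le⟩ hℓτ
    have h2l : 2 * Real.log (ζ * δ) < 0 := by linarith
    have hmul : ε ^ 2 * (n τ : ℝ) ≤ ε ^ 2 * (n ℓ : ℝ) := by
      have : (n τ : ℝ) ≤ n ℓ := Nat.cast_le.2 hnτℓ
      nlinarith [sq_nonneg ε]
    have hdiv : ε ^ 2 * (n ℓ : ℝ) / (2 * Real.log (ζ * δ)) ≤
        ε ^ 2 * (n τ : ℝ) / (2 * Real.log (ζ * δ)) := by
      rw [div_eq_mul_inv, div_eq_mul_inv]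
      exact mul_le_mul_of_nonpos_right hmul (inv_nonpos.2 h2l.le)
    have hsq : Real.sqrt (1 / 4 + ε ^ 2 * (n ℓ : ℝ) / (2 * Real.log (ζ * δ))) ≤
        Real.sqrt (1 / 4 + ε ^ 2 * (n τ : ℝ) / (2 * Real.log (ζ * δ))) :=
      Real.sqrt_le_sqrt (by linarith)
    have haτℓ : a τ ≤ a ℓ := by rw [ha τ, ha ℓ]; linarith
    have hpa : p < a ℓ := lt_of_lt_of_le hτb haτℓ
    have ha1 : a ℓ < 1 := by
      rw [ha ℓ]
      have := Real.sqrt_nonneg (1 / 4 + ε ^ 2 * (n ℓ : ℝ) / (2 * Real.log (ζ * δ)))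
      have := mul_pos hρ.1 hε
      linarith
    have hBsub : B ℓ ⊆ {ω | (n ℓ : ℝ) * a ℓ ≤ ∑ i ∈ Finset.range (n ℓ), X i ω} := by
      intro ω hω
      have hlt : a ℓ < phat ℓ ω := hω
      rw [hphat ℓ ω] at hlt
      have hm : (0 : ℝ) < n ℓ := Nat.cast_pos.2 (hpos ℓ)
      have := (lt_div_iff₀ hm).1 hlt
      show (n ℓ : ℝ) * a ℓ ≤ _
      linarith
    have hmono' : (P (B ℓ)).toReal ≤
        (P {ω | (n ℓ : ℝ) * a ℓ ≤ ∑ i ∈ Finset.range (n ℓ), X i ω}).toReal :=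
      ENNReal.toReal_mono (measure_ne_top _ _) (measure_mono hBsub)
    exact hmono'.trans (bern_chernoff P X hmeas hind p hp0 hber (n ℓ) (a ℓ) hpa ha1)
  -- combine
  calc ∫ ω, (n (L ω) : ℝ) ∂P ≤ ∫ ω, g ω ∂P := h1
    _ = (n τ : ℝ) + ∑ ℓ ∈ Finset.Ico τ s, c ℓ * (P (B ℓ)).toReal := hgval
    _ ≤ (n τ : ℝ) + ∑ ℓ ∈ Finset.Ico τ s, ((n (ℓ + 1) : ℝ) - (n ℓ : ℝ)) *
        Real.exp ((n ℓ) *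
          (a ℓ * Real.log (p / a ℓ) + (1 - a ℓ) * Real.log ((1 - p) / (1 - a ℓ)))) := by
      refine add_le_add_right (Finset.sum_le_sum fun ℓ hℓ => ?_) _
      obtain ⟨h1', h2'⟩ := Finset.mem_Ico.1 hℓ
      exact mul_le_mul_of_nonneg_left (hch ℓ hℓ) (hcnn ℓ h1' h2')
end
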